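/- Let $c_1, c_2 > 0$. Then the system of equations $\frac{x_1 x_2}{(x_1+x_2)^2} - 2c_1 x_1^2 = 0$ and $x_1 - 2c_2 x_2 (x_1+x_2)^2 = 0$ has exactly one solution with $x_1 > 0$ and $x_2 > 0$, namely $x_1 = \frac{\sqrt{c_2}}{\sqrt{c_1}+\sqrt{c_2}} \cdot \frac{1}{\sqrt{2\sqrt{c_1 c_2}}}$ and $x_2 = \frac{\sqrt{c_1}}{\sqrt{c_1}+\sqrt{c_2}} \cdot \frac{1}{\sqrt{2\sqrt{c_1 c_2}}}$. -/

import Mathlib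

noncomputable def eqX1 (c1 c2 : ℝ) : ℝ :=
  Real.sqrt c2 / (Real.sqrt c1 + Real.sqrt c2) * (1 / Real.sqrt (2 * Real.sqrt (c1 * c2)))

noncomputable def eqX2 (c1 c2 : ℝ) : ℝ :=
  Real.sqrt c1 / (Real.sqrt c1 + Real.sqrt c2) * (1 / Real.sqrt (2 * Real.sqrt (c1 * c2)))

theorem stmt0 (c1 c2 : ℝ) (hc1 : 0 < c1) (hc2 : 0 < c2) :
    ∀ x1 x2 : ℝ, 0 < x1 → 0 < x2 →
      ((x1 * x2 / (x1 + x2) ^ 2 - 2 * c1 * x1 ^ 2 = 0 ∧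
        x1 - 2 * c2 * x2 * (x1 + x2) ^ 2 = 0) ↔
       (x1 = eqX1 c1 c2 ∧ x2 = eqX2 c1 c2)) := by
  intro x1 x2 hx1 hx2
  set a := Real.sqrt c1 with ha_def
  set b := Real.sqrt c2 with hb_def
  have ha : 0 < a := Real.sqrt_pos.2 hc1
  have hb : 0 < b := Real.sqrt_pos.2 hc2
  have ha2 : a ^ 2 = c1 := Real.sq_sqrt hc1.le
  have hb2 : b ^ 2 = c2 := Real.sq_sqrt hc2.le
  have hab : Real.sqrt (c1 * c2) = a * b := Real.sqrt_mul hc1.le c2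
  set t := Real.sqrt (2 * Real.sqrt (c1 * c2)) with ht_def
  have ht0 : 0 < t := Real.sqrt_pos.2 (by rw [hab]; positivity)
  have ht2 : t ^ 2 = 2 * (a * b) := by
    rw [ht_def, Real.sq_sqrt (by rw [hab]; positivity), hab]
  have hE1 : eqX1 c1 c2 = b / ((a + b) * t) := by
    rw [eqX1, ← hb_def, ← ha_def, ← ht_def]
    field_simp
  have hE2 : eqX2 c1 c2 = a / ((a + b) * t) := by
    rw [eqX2, ← hb_def, ← ha_def, ← ht_def]
    field_simp
  clear_value a b t
  clear ha_def hb_def ht_def hab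
  have habt : (a + b) * t ≠ 0 := by positivity
  have hs : 0 < x1 + x2 := by linarith
  constructor
  · rintro ⟨h1, h2⟩
    have h1a : x1 * x2 = 2 * c1 * x1 ^ 2 * (x1 + x2) ^ 2 := by
      have := sub_eq_zero.mp h1
      field_simp at this
      linear_combination x1 * this
    have h1' : x2 = 2 * c1 * x1 * (x1 + x2) ^ 2 :=
      mul_left_cancel₀ hx1.ne'
        (show x1 * x2 = x1 * (2 * c1 * x1 * (x1 + x2) ^ 2) by linear_combination h1a)
    have h2' : x1 = 2 * c2 * x2 * (x1 + x2) ^ 2 := by linarith [sub_eq_zero.mp h2]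
    have e1 : x1 * x2 = 2 * c1 * x1 ^ 2 * (x1 + x2) ^ 2 := by linear_combination x1 * h1'
    have e2 : x1 * x2 = 2 * c2 * x2 ^ 2 * (x1 + x2) ^ 2 := by linear_combination x2 * h2'
    have hr : 2 * c1 * x1 ^ 2 = 2 * c2 * x2 ^ 2 :=
      mul_right_cancel₀ (pow_ne_zero 2 hs.ne') (by linarith)
    have e3 : x1 * x2 = 4 * c1 * c2 * x1 * x2 * (x1 + x2) ^ 4 := by
      linear_combination x2 * h2' + (2 * c2 * x2 * (x1 + x2) ^ 2) * h1'
    have hq : 4 * c1 * c2 * (x1 + x2) ^ 4 = 1 :=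
      mul_left_cancel₀ (show x1 * x2 ≠ 0 by positivity)
        (show x1 * x2 * (4 * c1 * c2 * (x1 + x2) ^ 4) = x1 * x2 * 1 by
          linear_combination -e3)
    have hv4 : ((x1 + x2) * t) ^ 4 = 1 := by
      linear_combination (x1 + x2) ^ 4 * (t ^ 2 + 2 * (a * b)) * ht2 +
        (4 * (x1 + x2) ^ 4 * b ^ 2) * ha2 + (4 * (x1 + x2) ^ 4 * c1) * hb2 + hq
    have hv : (x1 + x2) * t = 1 := by
      set v := (x1 + x2) * t with hv_def
      have hvpos : 0 < v := by positivity
      have h4 : (v - 1) * ((v + 1) * (v ^ 2 + 1)) = 0 := by linear_combination hv4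
      rcases mul_eq_zero.mp h4 with h | h
      · linarith
      · exfalso
        have : 0 < (v + 1) * (v ^ 2 + 1) := by positivity
        linarith
    have hba : b * x2 = a * x1 := by
      have hsq : (b * x2) ^ 2 = (a * x1) ^ 2 := by
        linear_combination x2 ^ 2 * hb2 - x1 ^ 2 * ha2 - (1/2 : ℝ) * hr
      have h5 : (b * x2 - a * x1) * (b * x2 + a * x1) = 0 := by linear_combination hsq
      rcases mul_eq_zero.mp h5 with h | h
      · linarith
      · exfalso
        have h6 : 0 < b * x2 + a * x1 := by positivity
        linarith
    constructor
    · rw [hE1, eq_div_iff habt]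
      linear_combination b * hv - t * hba
    · rw [hE2, eq_div_iff habt]
      linear_combination a * hv + t * hba
  · rintro ⟨hx1e, hx2e⟩
    rw [hx1e, hx2e, hE1, hE2]
    constructor
    · rw [sub_eq_zero]
      rw [div_eq_iff (by positivity)]
      field_simp
      linear_combination a * (a + b) ^ 2 * ht2 + 2 * b * (a + b) ^ 2 * ha2
    · rw [sub_eq_zero]
      field_simp
      linear_combination b * (a + b) ^ 2 * ht2 + 2 * a * (a + b) ^ 2 * hb2
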